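/- arXiv:1809.07382 — 3 statements merged into one kernel-verified Lean document; each statement's English description precedes it below -/
import Mathlib

section
/- If G is an (n−k)-regular (a, k−2)-distance antimagic graph on n vertices with 2 ≤ k ≤ (1+√(8n−7))/2, then the join G + K_1 is a non-regular (a+n+1, k−2)-distance antimagic graph on n+1 vertices (for k > 2, witnessed by extending the labeling of G by assigning label n+1 to the new vertex). -/
open scoped Classical
open Finset

/-- Weight of a vertex: sum of labels over its open neighborhood. -/
noncomputable def wsum {V : Type*} [Fintype V] (G : SimpleGraph V) (f : V → ℕ) (u : V) : ℕ :=
  ∑ v ∈ Finset.univ.filter (fun v => G.Adj u v), f v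

/-- A graph is distance magic if some bijective labeling by 1,...,n has constant weights. -/
def IsDistanceMagic {V : Type*} [Fintype V] (G : SimpleGraph V) : Prop :=
  ∃ (f : V ≃ Fin (Fintype.card V)) (c : ℕ),
    ∀ u, wsum G (fun v => (f v : ℕ) + 1) u = c

/-- `G` is `r`-regular. -/
def IsRegularDeg {V : Type*} [Fintype V] (G : SimpleGraph V) (r : ℕ) : Prop :=
  ∀ u : V, (Finset.univ.filter (fun v => G.Adj u v)).card = r

/-- `(a,d)`-distance antimagic: some bijective labeling by 1,...,n has weight set
`{a, a+d, ..., a+(n-1)d}`. -/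
def IsDistAntimagic {V : Type*} [Fintype V] (G : SimpleGraph V) (a d : ℕ) : Prop :=
  ∃ f : V ≃ Fin (Fintype.card V),
    Finset.image (fun u => wsum G (fun v => (f v : ℕ) + 1) u) Finset.univ
      = Finset.image (fun i : Fin (Fintype.card V) => a + (i : ℕ) * d) Finset.univ

/-- Circulant graph on `N` vertices with jumps `1,...,m` (so `H_{2m,N} = C_N^m`). -/
def circulant (N m : ℕ) : SimpleGraph (Fin N) :=
  SimpleGraph.fromRel (fun i j => ∃ k, 1 ≤ k ∧ k ≤ m ∧ ((i : ℕ) + k) % N = (j : ℕ))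

/-- The graph `(K_{n-1} - M) + K_1`: vertex `0` joined to all, and vertices `1,...,n-1`
forming a complete graph minus the perfect matching pairing `i` with `i + (n-1)/2 (mod n-1)`. -/
def calG (n : ℕ) : SimpleGraph (Fin n) :=
  SimpleGraph.fromRel (fun i j =>
    (i : ℕ) = 0 ∨ (j : ℕ) = 0 ∨
      ¬ (((i : ℕ) - 1 + (n - 1) / 2) % (n - 1) = (j : ℕ) - 1))

/-- Lexicographic product `G ∘ H`. -/
def lexProd {α β : Type*} (G : SimpleGraph α) (H : SimpleGraph β) : SimpleGraph (α × β) where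
  Adj x y := G.Adj x.1 y.1 ∨ (x.1 = y.1 ∧ H.Adj x.2 y.2)
  symm := by
    constructor
    rintro ⟨a, b⟩ ⟨c, d⟩ (h | ⟨h1, h2⟩)
    · exact Or.inl h.symm
    · exact Or.inr ⟨h1.symm, h2.symm⟩
  loopless := by
    constructor
    rintro ⟨a, b⟩ (h | ⟨-, h⟩)
    · exact G.loopless.irrefl a h
    · exact H.loopless.irrefl b h

/-- Direct (tensor) product `G × H`. -/
def tensorProd {α β : Type*} (G : SimpleGraph α) (H : SimpleGraph β) : SimpleGraph (α × β) where
  Adj x y := G.Adj x.1 y.1 ∧ H.Adj x.2 y.2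
  symm := ⟨fun _ _ h => ⟨h.1.symm, h.2.symm⟩⟩
  loopless := ⟨fun x h => G.loopless.irrefl x.1 h.1⟩

/-- The Harary graph `H_{3,n}`. -/
noncomputable def harary3 (n : ℕ) : SimpleGraph (Fin n) :=
  circulant n 1 ⊔ SimpleGraph.fromRel (fun i j =>
    if n % 2 = 0 then
      ∃ k, 1 ≤ k ∧ k ≤ n / 2 ∧ (i : ℕ) = k ∧ (j : ℕ) = (k + n / 2) % n
    else
      ((i : ℕ) = 0 ∧ ((j : ℕ) = (n - 1) / 2 ∨ (j : ℕ) = (n + 1) / 2)) ∨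
      (∃ k, 1 ≤ k ∧ k < (n - 1) / 2 ∧ (i : ℕ) = k ∧ (j : ℕ) = (k + (n + 1) / 2) % n))

/-- The Harary graph `H_{2n+1,2n+3}`: `C_{2n+3}^n` together with edges `v_0 v_{n+1}`,
`v_0 v_{n+2}` and `v_i v_{i+n+2}` for `1 ≤ i < n+1`. -/
def hararyOdd (n : ℕ) : SimpleGraph (Fin (2 * n + 3)) :=
  circulant (2 * n + 3) n ⊔ SimpleGraph.fromRel (fun i j =>
    ((i : ℕ) = 0 ∧ ((j : ℕ) = n + 1 ∨ (j : ℕ) = n + 2)) ∨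
    (∃ k, 1 ≤ k ∧ k < n + 1 ∧ (i : ℕ) = k ∧ (j : ℕ) = k + n + 2))

/-- The Harary graph `H_{4n+1,4n+4}`: circulant with jumps `1,...,2n` and `2n+2`. -/
def harary41 (n : ℕ) : SimpleGraph (Fin (4 * n + 4)) :=
  SimpleGraph.fromRel (fun i j =>
    ∃ k, ((1 ≤ k ∧ k ≤ 2 * n) ∨ k = 2 * n + 2) ∧ ((i : ℕ) + k) % (4 * n + 4) = (j : ℕ))

/-- The join `G + K_1`. -/
def joinK1 {V : Type*} (G : SimpleGraph V) : SimpleGraph (V ⊕ Unit) :=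
  SimpleGraph.fromRel (fun x y =>
    match x, y with
    | Sum.inl a, Sum.inl b => G.Adj a b
    | Sum.inl _, Sum.inr _ => True
    | Sum.inr _, _ => False)

lemma gauss2' (m : ℕ) : 2 * (∑ i ∈ Finset.range m, i) + 2 * m = m * (m + 1) := by
  induction m with
  | zero => simp
  | succ n ih =>
    rw [Finset.sum_range_succ]
    zify at ih ⊢
    linear_combination ih

/-- if G is (n-k)-regular and (a, k-2)-distance antimagic with
2 ≤ k ≤ (1+√(8n-7))/2, then G + K_1 is a non-regular (a+n+1, k-2)-distance antimagic
graph on n+1 vertices. -/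
theorem join_K1_antimagic {V : Type*} [Fintype V] (n k : ℕ) (hV : Fintype.card V = n)
    (hk2 : 2 ≤ k) (hkn : (2 * k - 1) ^ 2 ≤ 8 * n - 7)
    (G : SimpleGraph V) (hreg : IsRegularDeg G (n - k)) (a : ℕ)
    (h : IsDistAntimagic G a (k - 2)) :
    Fintype.card (V ⊕ Unit) = n + 1 ∧
    (¬ ∃ r, IsRegularDeg (joinK1 G) r) ∧
    IsDistAntimagic (joinK1 G) (a + n + 1) (k - 2) := by
  classical
  subst hV
  set N := Fintype.card V with hN
  obtain ⟨d, rfl⟩ : ∃ d, k = d + 2 := ⟨k - 2, by omega⟩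
  simp only [Nat.add_sub_cancel] at h ⊢
  -- basic bounds
  have hdN : d + 2 ≤ N ∧ 2 ≤ N := by
    have e : 2 * (d + 2) - 1 = 2 * d + 3 := by omega
    rw [e] at hkn
    have e2 : (2 * d + 3) ^ 2 = 4 * (d * d) + 12 * d + 9 := by ring
    rw [e2] at hkn
    have hdd : d ≤ d * d := by
      rcases Nat.eq_zero_or_pos d with h0 | h0
      · simp [h0]
      · exact Nat.le_mul_of_pos_left d h0
    obtain ⟨t, h1, h2⟩ : ∃ t, d ≤ t ∧ 4 * t + 12 * d + 9 ≤ 8 * N - 7 := ⟨d * d, hdd, hkn⟩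
    omega
  obtain ⟨hkN, hN2⟩ := hdN
  obtain ⟨q, hq⟩ : ∃ q, N = d + 2 + q := ⟨N - (d + 2), by omega⟩
  have hNk : N - (d + 2) = q := by omega
  rw [hNk] at hreg
  obtain ⟨f, hf⟩ := h
  set W : V → ℕ := fun u => wsum G (fun v => (f v : ℕ) + 1) u with hW
  -- Gauss sums
  set S : ℕ := ∑ v : V, ((f v : ℕ) + 1) with hSdef
  set TT : ℕ := ∑ i : Fin N, (i : ℕ) with hTTdef
  have hcomp : S = ∑ i : Fin N, ((i : ℕ) + 1) := (Equiv.sum_comp f (fun i : Fin N => (i : ℕ) + 1))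
  have hSsplit : S = TT + N := by
    rw [hcomp, hTTdef, Finset.sum_add_distrib, Finset.sum_const, Finset.card_univ,
      Fintype.card_fin, smul_eq_mul, mul_one]
  have hTT : 2 * TT + 2 * N = N * (N + 1) := by
    rw [hTTdef, Fin.sum_univ_eq_sum_range (fun i => i) N]
    exact gauss2' N
  have hS2 : 2 * S = N * (N + 1) := by
    calc 2 * S = 2 * TT + 2 * N := by rw [hSsplit]; ring
    _ = N * (N + 1) := hTT
  -- sum swap
  set SW : ℕ := ∑ u : V, W u with hSWdef
  have hswap : SW = q * S := by
    calc SW = ∑ u : V, ∑ v : V, (if G.Adj u v then (f v : ℕ) + 1 else 0) := by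
          rw [hSWdef]
          refine Finset.sum_congr rfl fun u _ => ?_
          rw [hW]
          simp only [wsum, Finset.sum_filter]
      _ = ∑ v : V, ∑ u : V, (if G.Adj u v then (f v : ℕ) + 1 else 0) := Finset.sum_comm
      _ = ∑ v : V, q * ((f v : ℕ) + 1) := by
          refine Finset.sum_congr rfl fun v _ => ?_
          rw [← Finset.sum_filter, Finset.sum_const, smul_eq_mul]
          congr 1
          have h1 : (Finset.univ.filter fun u => G.Adj u v)
              = (Finset.univ.filter fun u => G.Adj v u) := by
            ext u
            simp only [Finset.mem_filter, Finset.mem_univ, true_and]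
            rw [G.adj_comm]
          rw [h1, hreg v]
      _ = q * S := by rw [hSdef, Finset.mul_sum]
  have e1 : 2 * SW = q * (N * (N + 1)) := by rw [hswap, ← hS2]; ring
  have hsum_fin : ∑ i : Fin N, (a + (i : ℕ) * d) = N * a + d * TT := by
    rw [Finset.sum_add_distrib, Finset.sum_const, Finset.card_univ, Fintype.card_fin,
      smul_eq_mul]
    congr 1
    rw [hTTdef, Finset.mul_sum]
    simp [mul_comm]
  have e2 : SW = N * a + d * TT := by
    rcases Nat.eq_zero_or_pos d with hd0 | hdpos
    · subst hd0
      have hall : ∀ u : V, W u = a := by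
        intro u
        have hm : W u ∈ Finset.image W Finset.univ :=
          Finset.mem_image_of_mem W (Finset.mem_univ u)
        rw [hf] at hm
        simp only [Finset.mem_image, Finset.mem_univ, true_and, mul_zero, add_zero] at hm
        obtain ⟨i, hi⟩ := hm
        omega
      rw [hSWdef]
      calc ∑ u : V, W u = ∑ _u : V, a := Finset.sum_congr rfl fun u _ => hall u
        _ = N * a := by rw [Finset.sum_const, Finset.card_univ, smul_eq_mul, hN]
        _ = N * a + 0 * TT := by ring
    · have hφinj : Function.Injective (fun i : Fin N => a + (i : ℕ) * d) := by
        intro i j hij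
        simp only at hij
        have h' : (i : ℕ) * d = (j : ℕ) * d := by omega
        exact Fin.ext (Nat.eq_of_mul_eq_mul_right hdpos h')
      have hcardim : (Finset.image W Finset.univ).card = (Finset.univ : Finset V).card := by
        rw [hf, Finset.card_image_of_injective Finset.univ hφinj]
        simp only [Finset.card_univ, Fintype.card_fin, hN]
      have hinjOn : Set.InjOn W (Finset.univ : Finset V) :=
        Finset.injOn_of_card_image_eq hcardim
      have h1 : ∑ x ∈ Finset.image W Finset.univ, x = ∑ u : V, W u :=
        Finset.sum_image (fun x hx y hy hxy => hinjOn (by simpa using hx) (by simpa using hy) hxy)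
      have h2 : ∑ x ∈ Finset.image (fun i : Fin N => a + (i : ℕ) * d) Finset.univ, x
          = ∑ i : Fin N, (a + (i : ℕ) * d) :=
        Finset.sum_image (fun x _ y _ hxy => hφinj hxy)
      rw [hSWdef, ← h1, hf, h2, hsum_fin]
  -- the key arithmetic identity
  have star : N * (N + 1) = 2 * a + 2 * (N + 1) + 2 * (N * d) := by
    have big : N * (N * (N + 1)) = N * (2 * a + 2 * (N + 1) + 2 * (N * d)) := by
      zify at e1 e2 hTT hq ⊢
      linear_combination (-1 : ℤ) * e1 + 2 * e2 + (d : ℤ) * hTT + ((N : ℤ) * (N + 1)) * hq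
    exact Nat.eq_of_mul_eq_mul_left (by omega) big
  have hstar : S = a + (N + 1) + N * d := by
    have h2' : 2 * S = 2 * (a + (N + 1) + N * d) := by rw [hS2, star]; ring
    exact Nat.eq_of_mul_eq_mul_left (by norm_num) h2'
  -- the new labeling
  have hcard : Fintype.card (V ⊕ Unit) = N + 1 := by simp [← hN]
  set F : (V ⊕ Unit) ≃ Fin (Fintype.card (V ⊕ Unit)) :=
    ((f.sumCongr (Equiv.ofUnique Unit (Fin 1))).trans finSumFinEquiv).trans
      (finCongr hcard.symm) with hFdef
  have hFl : ∀ v : V, (F (Sum.inl v) : ℕ) = (f v : ℕ) := by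
    intro v
    simp [hFdef]
  have hFr : (F (Sum.inr ()) : ℕ) = N := by
    simp [hFdef, hN]
  -- adjacency in the join
  have hAll : ∀ v w : V, (joinK1 G).Adj (Sum.inl v) (Sum.inl w) ↔ G.Adj v w := by
    intro v w
    simp only [joinK1, SimpleGraph.fromRel_adj]
    constructor
    · rintro ⟨h1, h2 | h2⟩
      · exact h2
      · exact h2.symm
    · intro hvw
      exact ⟨fun he => G.ne_of_adj hvw (Sum.inl.inj he), Or.inl hvw⟩
  have hAlr : ∀ (v : V) (u : Unit), (joinK1 G).Adj (Sum.inl v) (Sum.inr u) := by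
    intro v u
    simp [joinK1, SimpleGraph.fromRel_adj]
  have hArl : ∀ (u : Unit) (v : V), (joinK1 G).Adj (Sum.inr u) (Sum.inl v) := by
    intro u v
    exact (hAlr v u).symm
  have hArr : ∀ u u' : Unit, ¬ (joinK1 G).Adj (Sum.inr u) (Sum.inr u') := by
    intro u u'
    simp [joinK1, SimpleGraph.fromRel_adj]
  -- weights in the join
  have hWl : ∀ v : V, wsum (joinK1 G) (fun x => (F x : ℕ) + 1) (Sum.inl v) = W v + (N + 1) := by
    intro v
    rw [wsum, Finset.sum_filter, Fintype.sum_sum_type]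
    simp only [hAll, hAlr, hFl, hFr, if_true]
    rw [hW]
    simp only [wsum, Finset.sum_filter]
    simp
  have hWr : wsum (joinK1 G) (fun x => (F x : ℕ) + 1) (Sum.inr ()) = S := by
    rw [wsum, Finset.sum_filter, Fintype.sum_sum_type]
    simp only [hArl, hArr, hFl, hFr, if_true, if_false]
    simp [hSdef]
  refine ⟨hcard, ?_, ?_⟩
  · rintro ⟨r, hr⟩
    have hv : Nonempty V := by
      rw [← Fintype.card_pos_iff]
      omega
    obtain ⟨v⟩ := hv
    have hr1 := hr (Sum.inr ())
    have hr2 := hr (Sum.inl v)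
    rw [Finset.card_filter, Fintype.sum_sum_type] at hr1 hr2
    simp only [hArl, hArr, if_true, if_false] at hr1
    simp only [hAll, hAlr, if_true] at hr2
    simp at hr1 hr2
    have h3 := hreg v
    omega
  · refine ⟨F, ?_⟩
    have hWmem : ∀ v : V, ∃ i : Fin N, a + (i : ℕ) * d = W v := by
      intro v
      have hm : W v ∈ Finset.image (fun i : Fin N => a + (i : ℕ) * d) Finset.univ := by
        rw [← hf]
        exact Finset.mem_image_of_mem W (Finset.mem_univ v)
      simpa using hm
    have hφmem : ∀ i : Fin N, ∃ v : V, W v = a + (i : ℕ) * d := by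
      intro i
      have hm : a + (i : ℕ) * d ∈ Finset.image W Finset.univ := by
        rw [hf]
        exact Finset.mem_image_of_mem _ (Finset.mem_univ i)
      simpa using hm
    ext x
    simp only [Finset.mem_image, Finset.mem_univ, true_and]
    constructor
    · rintro ⟨u, rfl⟩
      rcases u with v | u
      · obtain ⟨i, hi⟩ := hWmem v
        refine ⟨⟨(i : ℕ), by rw [hcard]; omega⟩, ?_⟩
        rw [hWl v]
        simp only [Fin.val_mk]
        omega
      · cases u
        refine ⟨⟨N, by rw [hcard]; omega⟩, ?_⟩
        rw [hWr, hstar]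
        simp only [Fin.val_mk]
        ring
    · rintro ⟨i, rfl⟩
      by_cases hi : (i : ℕ) < N
      · obtain ⟨v, hv⟩ := hφmem ⟨(i : ℕ), hi⟩
        refine ⟨Sum.inl v, ?_⟩
        rw [hWl v, hv]
        simp only [Fin.val_mk]
        ring
      · have hiN : (i : ℕ) = N := by
          have := i.isLt
          omega
        refine ⟨Sum.inr (), ?_⟩
        rw [hWr, hstar, hiN]
        ring
end

section
/- For n odd with n ≥ 3, the graph G = (K_{n−1} − M) + K_1 on n vertices (join of a vertex to K_{n−1} minus a perfect matching) is distance magic; conversely, any graph G on n vertices with maximum degree Δ(G) = n−1 is distance magic if and only if n is odd and G is isomorphic to (K_{n−1} − M) + K_1. -/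
open scoped Classical
open Finset

section Aux

variable {n : ℕ}

/-- Non-neighbors of `u`, excluding `u` itself. -/
noncomputable def NN (G : SimpleGraph (Fin n)) (u : Fin n) : Finset (Fin n) :=
  Finset.univ.filter (fun w => ¬ G.Adj u w ∧ w ≠ u)

lemma mem_NN {G : SimpleGraph (Fin n)} {u w : Fin n} :
    w ∈ NN G u ↔ ¬ G.Adj u w ∧ w ≠ u := by simp [NN]

lemma NN_symm {G : SimpleGraph (Fin n)} {u w : Fin n} :
    w ∈ NN G u ↔ u ∈ NN G w := by
  simp only [mem_NN]
  constructor <;> rintro ⟨h1, h2⟩ <;> exact ⟨fun h => h1 h.symm, h2.symm⟩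

lemma wsum_partition (G : SimpleGraph (Fin n)) (g : Fin n → ℕ) (u : Fin n) :
    wsum G g u + (g u + ∑ w ∈ NN G u, g w) = ∑ x, g x := by
  have h1 : (Finset.univ.filter (fun w => ¬ G.Adj u w)) = insert u (NN G u) := by
    ext w
    simp only [Finset.mem_filter, Finset.mem_univ, true_and, Finset.mem_insert, mem_NN]
    by_cases hw : w = u
    · subst hw; simp [G.irrefl]
    · tauto
  have h2 : ∑ w ∈ Finset.univ.filter (fun w => ¬ G.Adj u w), g w
      = g u + ∑ w ∈ NN G u, g w := by
    rw [h1, Finset.sum_insert (by simp [mem_NN])]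
  rw [wsum, ← h2, Finset.sum_filter_add_sum_filter_not Finset.univ (fun w => G.Adj u w) g]

lemma isDistanceMagic_of_iso {G H : SimpleGraph (Fin n)} (e : G ≃g H)
    (h : IsDistanceMagic H) : IsDistanceMagic G := by
  obtain ⟨f, c, hf⟩ := h
  refine ⟨e.toEquiv.trans f, c, fun u => ?_⟩
  rw [← hf (e u), wsum, wsum]
  refine Finset.sum_equiv e.toEquiv ?_ ?_
  · intro i
    simp only [Finset.mem_filter, Finset.mem_univ, true_and]
    exact (SimpleGraph.Iso.map_adj_iff e).symm
  · intro i _; rfl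

lemma dominating (G : SimpleGraph (Fin n)) (v : Fin n)
    (h : (Finset.univ.filter (fun w => G.Adj v w)).card = n - 1) :
    ∀ w, G.Adj v w ↔ w ≠ v := by
  have hsub : (Finset.univ.filter (fun w => G.Adj v w)) ⊆ Finset.univ.erase v := by
    intro w hw
    simp only [Finset.mem_filter, Finset.mem_univ, true_and] at hw
    exact Finset.mem_erase.2 ⟨(G.ne_of_adj hw).symm, Finset.mem_univ w⟩
  have hcard : (Finset.univ.erase v).card = n - 1 := by
    rw [Finset.card_erase_of_mem (Finset.mem_univ v)]
    simp
  have heq := Finset.eq_of_subset_of_card_le hsub (by rw [hcard, h])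
  intro w
  constructor
  · exact fun hw => (G.ne_of_adj hw).symm
  · intro hw
    have : w ∈ Finset.univ.erase v := Finset.mem_erase.2 ⟨hw, Finset.mem_univ w⟩
    rw [← heq] at this
    simpa using this

end Aux

section CalG

lemma match_iff {m a b : ℕ} (hm : 1 ≤ m) (ha1 : 1 ≤ a) (ha2 : a ≤ 2 * m)
    (hb1 : 1 ≤ b) (hb2 : b ≤ 2 * m) :
    (a - 1 + m) % (2 * m) = b - 1 ↔ (a + m = b ∨ b + m = a) := by
  rcases le_or_gt a m with h | h
  · rw [Nat.mod_eq_of_lt (by omega)]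
    omega
  · rw [Nat.mod_eq_sub_mod (by omega), Nat.mod_eq_of_lt (by omega)]
    omega

lemma calG_adj {m : ℕ} (hm : 1 ≤ m) (x y : Fin (2 * m + 1)) :
    (calG (2 * m + 1)).Adj x y ↔
      x ≠ y ∧ ((x : ℕ) = 0 ∨ (y : ℕ) = 0 ∨ ¬ ((x : ℕ) + m = y ∨ (y : ℕ) + m = x)) := by
  have hd : (2 * m + 1 - 1) / 2 = m := by omega
  have hn : (2 * m + 1 - 1) = 2 * m := by omega
  rw [calG, SimpleGraph.fromRel_adj, hd, hn]
  constructor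
  · rintro ⟨hxy, h | h⟩
    · refine ⟨hxy, ?_⟩
      rcases h with h0 | h0 | h0
      · exact Or.inl h0
      · exact Or.inr (Or.inl h0)
      · rcases Nat.eq_zero_or_pos (x : ℕ) with hx0 | hx0
        · exact Or.inl hx0
        rcases Nat.eq_zero_or_pos (y : ℕ) with hy0 | hy0
        · exact Or.inr (Or.inl hy0)
        refine Or.inr (Or.inr ?_)
        rw [← match_iff hm hx0 (by omega) hy0 (by omega)]
        exact h0
    · refine ⟨hxy, ?_⟩
      rcases h with h0 | h0 | h0
      · exact Or.inr (Or.inl h0)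
      · exact Or.inl h0
      · rcases Nat.eq_zero_or_pos (x : ℕ) with hx0 | hx0
        · exact Or.inl hx0
        rcases Nat.eq_zero_or_pos (y : ℕ) with hy0 | hy0
        · exact Or.inr (Or.inl hy0)
        refine Or.inr (Or.inr ?_)
        rw [← match_iff hm hx0 (by omega) hy0 (by omega)] at *
        rw [match_iff hm hy0 (by omega) hx0 (by omega)] at h0
        rw [match_iff hm hx0 (by omega) hy0 (by omega)]
        omega
  · rintro ⟨hxy, h⟩
    refine ⟨hxy, Or.inl ?_⟩
    rcases h with h0 | h0 | h0
    · exact Or.inl h0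
    · exact Or.inr (Or.inl h0)
    · rcases Nat.eq_zero_or_pos (x : ℕ) with hx0 | hx0
      · exact Or.inl hx0
      rcases Nat.eq_zero_or_pos (y : ℕ) with hy0 | hy0
      · exact Or.inr (Or.inl hy0)
      refine Or.inr (Or.inr ?_)
      rw [match_iff hm hx0 (by omega) hy0 (by omega)]
      exact h0

/-- label (minus one) used in the magic labeling of `calG`. -/
def Fdef (m x : ℕ) : ℕ := if x = 0 then 2 * m else if x ≤ m then x - 1 else 3 * m - x

lemma Fdef_lt {m x : ℕ} (hm : 1 ≤ m) (hx : x ≤ 2 * m) : Fdef m x < 2 * m + 1 := by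
  unfold Fdef; split_ifs <;> omega

lemma Fdef_inj {m : ℕ} (hm : 1 ≤ m) {x y : ℕ} (hx : x ≤ 2 * m) (hy : y ≤ 2 * m)
    (h : Fdef m x = Fdef m y) : x = y := by
  unfold Fdef at h; split_ifs at h <;> omega

lemma calG_NN_zero {m : ℕ} (hm : 1 ≤ m) (u : Fin (2 * m + 1)) (hu : (u : ℕ) = 0) :
    NN (calG (2 * m + 1)) u = ∅ := by
  ext w
  simp only [mem_NN, Finset.notMem_empty, iff_false, not_and, not_not]
  intro hw
  by_contra hne
  exact hw ((calG_adj hm u w).mpr ⟨fun h => hne h.symm, Or.inl hu⟩)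

lemma calG_NN_ne_zero {m : ℕ} (hm : 1 ≤ m) (u p : Fin (2 * m + 1)) (hu : (u : ℕ) ≠ 0)
    (hp : (p : ℕ) = if (u : ℕ) ≤ m then (u : ℕ) + m else (u : ℕ) - m) :
    NN (calG (2 * m + 1)) u = {p} := by
  have hub : (u : ℕ) < 2 * m + 1 := u.isLt
  have hpb : (p : ℕ) < 2 * m + 1 := p.isLt
  ext w
  have hwb : (w : ℕ) < 2 * m + 1 := w.isLt
  simp only [mem_NN, Finset.mem_singleton, calG_adj hm]
  constructor
  · rintro ⟨hadj, hne⟩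
    push_neg at hadj
    have h := hadj hne.symm
    -- h : ¬(u = 0 ∨ w = 0 ∨ ¬ match)
    obtain ⟨h1, h2, h3⟩ := h
    have : (w : ℕ) = (p : ℕ) := by split_ifs at hp <;> omega
    exact Fin.ext this
  · rintro rfl
    have hwne : (w : ℕ) ≠ (u : ℕ) := by split_ifs at hp <;> omega
    constructor
    · rintro ⟨-, h⟩
      rcases h with h | h | h
      · exact hu h
      · split_ifs at hp <;> omega
      · apply h; split_ifs at hp <;> omega
    · exact fun h => hwne (by rw [h])

lemma calG_magic {m : ℕ} (hm : 1 ≤ m) : IsDistanceMagic (calG (2 * m + 1)) := by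
  set n := 2 * m + 1 with hn
  have hinj : Function.Injective (fun x : Fin n => (⟨Fdef m x.val, Fdef_lt hm (by omega)⟩ : Fin n)) := by
    intro x y h
    exact Fin.ext (Fdef_inj hm (by omega) (by omega) (by simpa using congrArg Fin.val h))
  have hbij := (Finite.injective_iff_bijective).mp hinj
  set F : Fin n ≃ Fin n := Equiv.ofBijective _ hbij with hF
  have hFval : ∀ x : Fin n, ((F x : Fin n) : ℕ) = Fdef m x.val := fun x => rfl
  refine ⟨F.trans (finCongr (Fintype.card_fin n).symm), (∑ x : Fin n, (Fdef m x.val + 1)) - n, fun u => ?_⟩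
  have hg : ∀ x : Fin n, ((F.trans (finCongr (Fintype.card_fin n).symm)) x : ℕ) + 1 = Fdef m x.val + 1 := by
    intro x; simp [hFval]
  set g : Fin n → ℕ := fun v => ((F.trans (finCongr (Fintype.card_fin n).symm)) v : ℕ) + 1 with hgdef
  have hgeq : ∀ x, g x = Fdef m x.val + 1 := hg
  have hpart := wsum_partition (calG n) g u
  have hkey : g u + ∑ w ∈ NN (calG n) u, g w = n := by
    rcases Nat.eq_zero_or_pos (u : ℕ) with hu0 | hu0
    · rw [calG_NN_zero hm u hu0]
      simp [hgeq, Fdef, hu0, hn]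
    · have hub : (u : ℕ) < 2 * m + 1 := u.isLt
      obtain ⟨pv, hpveq⟩ : ∃ pv : ℕ, pv = if (u : ℕ) ≤ m then (u : ℕ) + m else (u : ℕ) - m :=
        ⟨_, rfl⟩
      have hpvlt : pv < n := by rw [hpveq]; split_ifs <;> omega
      rw [calG_NN_ne_zero hm u ⟨pv, hpvlt⟩ (by omega) hpveq, Finset.sum_singleton]
      simp only [hgeq]
      show Fdef m (u : ℕ) + 1 + (Fdef m pv + 1) = n
      simp only [Fdef]
      split_ifs at hpveq ⊢ <;> omega
  have hsum : ∑ x : Fin n, g x = ∑ x : Fin n, (Fdef m x.val + 1) := by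
    apply Finset.sum_congr rfl; intro x _; exact hgeq x
  rw [hsum] at hpart
  omega

end CalG

section Psi

def psi (m k : ℕ) : ℕ := if k ≤ m then k else 3 * m + 1 - k

lemma psi_bound {m k : ℕ} (h1 : 1 ≤ k) (h2 : k ≤ 2 * m) : 1 ≤ psi m k ∧ psi m k ≤ 2 * m := by
  unfold psi; split_ifs <;> omega

lemma psi_inj {m a b : ℕ} (ha1 : 1 ≤ a) (ha2 : a ≤ 2 * m) (hb1 : 1 ≤ b) (hb2 : b ≤ 2 * m)
    (h : psi m a = psi m b) : a = b := by
  unfold psi at h; split_ifs at h <;> omega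

lemma psi_pair {m a b : ℕ} (ha1 : 1 ≤ a) (ha2 : a ≤ 2 * m) (hb1 : 1 ≤ b) (hb2 : b ≤ 2 * m) :
    (psi m a + m = psi m b ∨ psi m b + m = psi m a) ↔ a + b = 2 * m + 1 := by
  unfold psi; split_ifs <;> omega

end Psi

section Forward

lemma forward_main {n : ℕ} (hn : 2 ≤ n) (G : SimpleGraph (Fin n)) (v : Fin n)
    (hv : ∀ w, G.Adj v w ↔ w ≠ v) (hmagic : IsDistanceMagic G) :
    Odd n ∧ Nonempty (G ≃g calG n) := by
  obtain ⟨f0, c, hc⟩ := hmagic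
  set f : Fin n ≃ Fin n := f0.trans (finCongr (Fintype.card_fin n)) with hf
  set g : Fin n → ℕ := fun x => (f x : ℕ) + 1 with hg
  have hgf : (fun x => (f0 x : ℕ) + 1) = g := by funext x; simp [hg, hf]
  have hgc : ∀ u, wsum G g u = c := by intro u; rw [← hgf]; exact hc u
  have hg1 : ∀ x, 1 ≤ g x := fun x => by simp [hg]
  have hgn : ∀ x, g x ≤ n := fun x => by
    have := (f x).isLt; simp only [hg]; omega
  have hginj : Function.Injective g := by
    intro a b h
    apply f.injective
    exact Fin.ext (by simpa [hg] using h)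
  have hgsurj : ∀ k, 1 ≤ k → k ≤ n → ∃ x, g x = k := by
    intro k h1 h2
    refine ⟨f.symm ⟨k - 1, by omega⟩, ?_⟩
    simp only [hg, Equiv.apply_symm_apply]
    omega
  have hpart : ∀ u, wsum G g u + (g u + ∑ w ∈ NN G u, g w) = ∑ x, g x :=
    fun u => wsum_partition G g u
  have hNNv : NN G v = ∅ := by
    ext w
    simp only [mem_NN, Finset.notMem_empty, iff_false, not_and, not_not]
    intro hw
    by_contra hne
    exact hw ((hv w).2 hne)
  have hkey : ∀ u, g u + ∑ w ∈ NN G u, g w = g v := by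
    intro u
    have h1 := hpart u
    have h2 := hpart v
    rw [hNNv, Finset.sum_empty] at h2
    rw [hgc u] at h1
    rw [hgc v] at h2
    omega
  have hNN_ne_v : ∀ u w, w ∈ NN G u → w ≠ v := by
    intro u w hw
    rcases mem_NN.1 hw with ⟨h1, h2⟩
    intro hwv
    rcases eq_or_ne u v with h | h
    · exact h2 (hwv.trans h.symm)
    · exact h1 (by rw [hwv]; exact ((hv u).2 h).symm)
  have hlt : ∀ u, u ≠ v → (NN G u).Nonempty ∧ g u < g v := by
    intro u hu
    rcases Finset.eq_empty_or_nonempty (NN G u) with he | hne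
    · exfalso
      have h0 := hkey u
      rw [he, Finset.sum_empty] at h0
      exact hu (hginj (by omega))
    · refine ⟨hne, ?_⟩
      obtain ⟨w, hw⟩ := hne
      have h1 : g w ≤ ∑ w ∈ NN G u, g w :=
        Finset.single_le_sum (fun i _ => Nat.zero_le _) hw
      have := hg1 w
      have := hkey u
      omega
  have hgv : g v = n := by
    obtain ⟨x, hx⟩ := hgsurj n (by omega) le_rfl
    rcases eq_or_ne x v with rfl | hxv
    · exact hx
    · have := (hlt x hxv).2
      have := hgn v
      omega
  have hns : ∀ u, u ≠ v → g u + ∑ w ∈ NN G u, g w = n := by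
    intro u hu; rw [hkey u, hgv]
  -- main structural claim
  have claim : ∀ d u, u ≠ v → n < 2 * g u → n - g u ≤ d →
      ∀ w, w ∈ NN G u ↔ g w + g u = n := by
    intro d
    induction d with
    | zero =>
      intro u huv _ hle w
      exact absurd hle (by have := (hlt u huv).2; omega)
    | succ d ih =>
      intro u huv hgu hd w
      have hnsu := hns u huv
      have hne := (hlt u huv).1
      have hlgu : g u < n := by have := (hlt u huv).2; omega
      have hub : ∀ x, x ∈ NN G u → g x ≤ n - g u := by
        intro x hx
        have : g x ≤ ∑ w ∈ NN G u, g w :=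
          Finset.single_le_sum (fun i _ => Nat.zero_le _) hx
        omega
      have hlb : ∀ x, x ∈ NN G u → n ≤ g x + g u := by
        intro x hx
        by_contra hcon
        push_neg at hcon
        have hx1 := hg1 x
        have hxn := hgn x
        obtain ⟨u', hu'⟩ := hgsurj (n - g x) (by omega) (by omega)
        have hu'v : u' ≠ v := by
          intro h; rw [h, hgv] at hu'; omega
        have h2u' : n < 2 * g u' := by rw [hu']; omega
        have hdu' : n - g u' ≤ d := by rw [hu']; omega
        have hIH := ih u' hu'v h2u' hdu'
        have hxu' : x ∈ NN G u' := (hIH x).2 (by rw [hu']; omega)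
        have h1 : u' ∈ NN G x := NN_symm.1 hxu'
        have h2 : u ∈ NN G x := NN_symm.1 hx
        have hxv : x ≠ v := hNN_ne_v u x hx
        have hnsx := hns x hxv
        have huu' : u ≠ u' := by
          intro h; rw [← h] at hu'; omega
        have hpair : g u' + g u ≤ ∑ z ∈ NN G x, g z := by
          have hsub : ({u', u} : Finset (Fin n)) ⊆ NN G x := by
            intro z hz
            simp only [Finset.mem_insert, Finset.mem_singleton] at hz
            rcases hz with rfl | rfl <;> assumption
          calc g u' + g u = ∑ z ∈ ({u', u} : Finset (Fin n)), g z :=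
                (Finset.sum_pair huu'.symm).symm
            _ ≤ ∑ z ∈ NN G x, g z := Finset.sum_le_sum_of_subset hsub
        have := hg1 u
        rw [hu'] at hpair
        omega
      constructor
      · intro hwmem
        have := hub w hwmem
        have := hlb w hwmem
        omega
      · intro hweq
        obtain ⟨x0, hx0⟩ := hne
        have hx0v : g x0 + g u = n := by
          have := hub x0 hx0; have := hlb x0 hx0; omega
        have hwx : w = x0 := hginj (by omega)
        rw [hwx]; exact hx0
  -- parity
  have hodd : n % 2 = 1 := by
    by_contra hpar
    have hev : n % 2 = 0 := by omega
    obtain ⟨u, hu⟩ := hgsurj (n / 2) (by omega) (by omega)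
    have huv : u ≠ v := by
      intro h; rw [h, hgv] at hu; omega
    obtain ⟨⟨w, hw⟩, -⟩ := hlt u huv
    have hwu : w ≠ u := (mem_NN.1 hw).2
    have hwv : w ≠ v := hNN_ne_v u w hw
    have hgwne : g w ≠ n / 2 := fun h => hwu (hginj (by rw [h, hu]))
    have hgwn : g w < n := by have := (hlt w hwv).2; omega
    have hgw1 := hg1 w
    rcases lt_trichotomy (2 * g w) n with hl | he | hr
    · obtain ⟨u', hu'⟩ := hgsurj (n - g w) (by omega) (by omega)
      have hu'v : u' ≠ v := by
        intro h; rw [h, hgv] at hu'; omega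
      have hcl := claim (n - g u') u' hu'v (by rw [hu']; omega) le_rfl
      have hwmem : w ∈ NN G u' := (hcl w).2 (by rw [hu']; omega)
      have h1 : u' ∈ NN G w := NN_symm.1 hwmem
      have h2 : u ∈ NN G w := NN_symm.1 hw
      have huu' : u ≠ u' := by
        intro h; rw [← h, hu] at hu'; omega
      have hnsw := hns w hwv
      have hpair : g u' + g u ≤ ∑ z ∈ NN G w, g z := by
        have hsub : ({u', u} : Finset (Fin n)) ⊆ NN G w := by
          intro z hz
          simp only [Finset.mem_insert, Finset.mem_singleton] at hz
          rcases hz with rfl | rfl <;> assumption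
        calc g u' + g u = ∑ z ∈ ({u', u} : Finset (Fin n)), g z :=
              (Finset.sum_pair huu'.symm).symm
          _ ≤ ∑ z ∈ NN G w, g z := Finset.sum_le_sum_of_subset hsub
      rw [hu', hu] at hpair
      omega
    · exact hgwne (by omega)
    · have hcl := claim (n - g w) w hwv hr le_rfl
      have := (hcl u).1 (NN_symm.1 hw)
      omega
  -- full characterization of non-neighborhoods
  have hNNchar : ∀ u, u ≠ v → ∀ w, w ∈ NN G u ↔ g w + g u = n := by
    intro u huv w
    have hu1 := hg1 u
    have hun : g u < n := by have := (hlt u huv).2; omega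
    rcases lt_trichotomy (2 * g u) n with hl | he | hr
    · obtain ⟨u', hu'⟩ := hgsurj (n - g u) (by omega) (by omega)
      have hu'v : u' ≠ v := by
        intro h; rw [h, hgv] at hu'; omega
      have hcl := claim (n - g u') u' hu'v (by rw [hu']; omega) le_rfl
      have humem : u ∈ NN G u' := (hcl u).2 (by rw [hu']; omega)
      have hu'mem : u' ∈ NN G u := NN_symm.1 humem
      constructor
      · intro hwm
        rcases eq_or_ne w u' with rfl | hne
        · rw [hu']; omega
        · exfalso
          have hnsu := hns u huv
          have hpair : g w + g u' ≤ ∑ z ∈ NN G u, g z := by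
            have hsub : ({w, u'} : Finset (Fin n)) ⊆ NN G u := by
              intro z hz
              simp only [Finset.mem_insert, Finset.mem_singleton] at hz
              rcases hz with rfl | rfl <;> assumption
            calc g w + g u' = ∑ z ∈ ({w, u'} : Finset (Fin n)), g z :=
                  (Finset.sum_pair hne).symm
              _ ≤ ∑ z ∈ NN G u, g z := Finset.sum_le_sum_of_subset hsub
          have := hg1 w
          rw [hu'] at hpair
          omega
      · intro hweq
        have hwu' : w = u' := hginj (by omega)
        rw [hwu']; exact hu'mem
    · exact absurd he (by omega)
    · exact claim (n - g u) u huv hr le_rfl w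
  have hadjchar : ∀ x y, G.Adj x y ↔ x ≠ y ∧ (x = v ∨ y = v ∨ g x + g y ≠ n) := by
    intro x y
    rcases eq_or_ne x v with rfl | hxv
    · constructor
      · intro h; exact ⟨G.ne_of_adj h, Or.inl rfl⟩
      · rintro ⟨h, -⟩; exact (hv y).2 h.symm
    rcases eq_or_ne y v with rfl | hyv
    · constructor
      · intro h; exact ⟨G.ne_of_adj h, Or.inr (Or.inl rfl)⟩
      · rintro ⟨h, -⟩; exact ((hv x).2 h).symm
    · constructor
      · intro h
        refine ⟨G.ne_of_adj h, Or.inr (Or.inr ?_)⟩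
        intro hsum
        have : y ∈ NN G x := (hNNchar x hxv y).2 (by omega)
        exact (mem_NN.1 this).1 h
      · rintro ⟨hne, hrest⟩
        rcases hrest with h | h | h
        · exact absurd h hxv
        · exact absurd h hyv
        · by_contra hadj
          have hm : y ∈ NN G x := mem_NN.2 ⟨hadj, hne.symm⟩
          have := (hNNchar x hxv y).1 hm
          omega
  refine ⟨Nat.odd_iff.2 hodd, ?_⟩
  -- build the isomorphism
  obtain ⟨m, hm⟩ : ∃ m, n = 2 * m + 1 := ⟨n / 2, by omega⟩
  subst hm
  have hm1 : 1 ≤ m := by omega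
  have hgxb : ∀ x, x ≠ v → 1 ≤ g x ∧ g x ≤ 2 * m := by
    intro x hx
    have := (hlt x hx).2
    have := hg1 x
    omega
  obtain ⟨ev, hev⟩ : ∃ ev : Fin (2 * m + 1) → ℕ,
      ev = fun x => if x = v then 0 else psi m (g x) := ⟨_, rfl⟩
  have hevlt : ∀ x, ev x < 2 * m + 1 := by
    intro x
    rw [hev]
    dsimp only
    split_ifs with h
    · omega
    · have hb := hgxb x h
      have := psi_bound hb.1 hb.2
      omega
  have hevv : ∀ x, x ≠ v → ev x = psi m (g x) := by
    intro x hx; rw [hev]; simp [hx]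
  have hevv0 : ev v = 0 := by rw [hev]; simp
  have hinj : Function.Injective (fun x => (⟨ev x, hevlt x⟩ : Fin (2 * m + 1))) := by
    intro a b h
    have hval : ev a = ev b := by simpa using congrArg Fin.val h
    rcases eq_or_ne a v with hav | hav
    · rcases eq_or_ne b v with hbv | hbv
      · rw [hav, hbv]
      · exfalso
        rw [hav, hevv0, hevv b hbv] at hval
        have hb := hgxb b hbv
        have := psi_bound hb.1 hb.2
        omega
    · rcases eq_or_ne b v with hbv | hbv
      · exfalso
        rw [hbv, hevv0, hevv a hav] at hval
        have hb := hgxb a hav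
        have := psi_bound hb.1 hb.2
        omega
      · rw [hevv a hav, hevv b hbv] at hval
        have ha := hgxb a hav
        have hb := hgxb b hbv
        exact hginj (psi_inj ha.1 ha.2 hb.1 hb.2 hval)
  set e : Fin (2 * m + 1) ≃ Fin (2 * m + 1) :=
    Equiv.ofBijective _ (Finite.injective_iff_bijective.mp hinj) with he
  have heval : ∀ x, ((e x : Fin (2 * m + 1)) : ℕ) = ev x := fun x => rfl
  refine ⟨⟨e, ?_⟩⟩
  intro a b
  rw [calG_adj hm1 (e a) (e b), hadjchar a b]
  have hene : e a ≠ e b ↔ a ≠ b := e.injective.ne_iff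
  rcases eq_or_ne a v with rfl | hav
  · constructor
    · rintro ⟨hne, -⟩
      exact ⟨hene.1 hne, Or.inl rfl⟩
    · rintro ⟨hne, -⟩
      exact ⟨hene.2 hne, Or.inl (by rw [heval, hevv0])⟩
  rcases eq_or_ne b v with rfl | hbv
  · constructor
    · rintro ⟨hne, -⟩
      exact ⟨hene.1 hne, Or.inr (Or.inl rfl)⟩
    · rintro ⟨hne, -⟩
      exact ⟨hene.2 hne, Or.inr (Or.inl (by rw [heval, hevv0]))⟩
  · have ha := hgxb a hav
    have hb := hgxb b hbv
    have hpa := psi_bound ha.1 ha.2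
    have hpb := psi_bound hb.1 hb.2
    have hea : ((e a : Fin (2 * m + 1)) : ℕ) = psi m (g a) := by rw [heval, hevv a hav]
    have heb : ((e b : Fin (2 * m + 1)) : ℕ) = psi m (g b) := by rw [heval, hevv b hbv]
    constructor
    · rintro ⟨hne, hcl⟩
      refine ⟨hene.1 hne, Or.inr (Or.inr ?_)⟩
      intro hsum
      rcases hcl with h0 | h0 | h0
      · rw [hea] at h0; omega
      · rw [heb] at h0; omega
      · exact h0 (by rw [hea, heb]; exact (psi_pair ha.1 ha.2 hb.1 hb.2).2 hsum)
    · rintro ⟨hne, hcl⟩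
      refine ⟨hene.2 hne, Or.inr (Or.inr ?_)⟩
      rw [hea, heb]
      intro hmatch
      have hsum := (psi_pair ha.1 ha.2 hb.1 hb.2).1 hmatch
      rcases hcl with h0 | h0 | h0
      · exact hav h0
      · exact hbv h0
      · exact h0 hsum

end Forward

section Small

lemma magic_one (G : SimpleGraph (Fin 1)) : IsDistanceMagic G := by
  refine ⟨finCongr (Fintype.card_fin 1).symm, 0, fun u => ?_⟩
  rw [wsum]
  have h : Finset.univ.filter (fun w => G.Adj u w) = ∅ := by
    ext w
    simp only [Finset.mem_filter, Finset.mem_univ, true_and, Finset.notMem_empty, iff_false]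
    rw [Subsingleton.elim w u]
    exact G.loopless.irrefl u
  rw [h, Finset.sum_empty]

lemma iso_one (G H : SimpleGraph (Fin 1)) : Nonempty (G ≃g H) := by
  refine ⟨⟨Equiv.refl _, ?_⟩⟩
  intro a b
  have hab : a = b := Subsingleton.elim a b
  subst hab
  exact iff_of_false (H.loopless.irrefl a) (G.loopless.irrefl a)

end Small

/-- (K_{n-1} - M) + K_1 is distance magic for n odd, and a graph on n
vertices with maximum degree n-1 is distance magic iff n is odd and it is isomorphic
to (K_{n-1} - M) + K_1. -/
theorem maxdeg_distance_magic_characterization :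
    (∀ n : ℕ, 3 ≤ n → Odd n → IsDistanceMagic (calG n)) ∧
    (∀ (n : ℕ) (G : SimpleGraph (Fin n)), 1 ≤ n →
      (∃ v, (Finset.univ.filter (fun w => G.Adj v w)).card = n - 1) →
      (IsDistanceMagic G ↔ (Odd n ∧ Nonempty (G ≃g calG n)))) := by
  constructor
  · intro n h3 hodd
    have hodd' := Nat.odd_iff.1 hodd
    obtain ⟨m, hm⟩ : ∃ m, n = 2 * m + 1 := ⟨n / 2, by omega⟩
    subst hm
    exact calG_magic (by omega)
  · rintro n G hn1 ⟨v, hv0⟩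
    have hv := dominating G v hv0
    constructor
    · intro hmagic
      rcases eq_or_lt_of_le hn1 with h1 | h2
      · -- n = 1
        refine ⟨by rw [← h1]; exact odd_one, ?_⟩
        subst h1
        exact iso_one G (calG 1)
      · exact forward_main h2 G v hv hmagic
    · rintro ⟨hodd, ⟨iso⟩⟩
      rcases eq_or_lt_of_le hn1 with h1 | h2
      · subst h1
        exact magic_one G
      · have hodd' := Nat.odd_iff.1 hodd
        obtain ⟨m, hm⟩ : ∃ m, n = 2 * m + 1 := ⟨n / 2, by omega⟩
        subst hm
        exact isDistanceMagic_of_iso iso (calG_magic (by omega))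
end

section
/- If G is an r-regular graph on n vertices with r even, n even, and d odd, then G is not (a,d)-distance antimagic for any integer a. -/
open scoped Classical
open Finset

/-- an r-regular graph on n vertices with r even, n even, d odd is not
(a,d)-distance antimagic. -/
theorem even_regular_not_antimagic_odd_d {V : Type*} [Fintype V] [Nonempty V]
    (G : SimpleGraph V) (r a d : ℕ) (hr : Even r) (hn : Even (Fintype.card V))
    (hd : Odd d) (hreg : IsRegularDeg G r) : ¬ IsDistAntimagic G a d := by
  rintro ⟨f, hf⟩
  classical
  have hn1 : 0 < Fintype.card V := Fintype.card_pos
  have hdpos : 0 < d := hd.pos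
  -- injectivity of the target map
  have hinjR : Function.Injective (fun i : Fin (Fintype.card V) => a + (i : ℕ) * d) := by
    intro i j h
    simp only at h
    exact Fin.ext (Nat.eq_of_mul_eq_mul_right hdpos (by omega : (i : ℕ) * d = (j : ℕ) * d))
  set w : V → ℕ := fun u => wsum G (fun v => (f v : ℕ) + 1) u with hw
  have hcardR : (Finset.image (fun i : Fin (Fintype.card V) => a + (i : ℕ) * d)
      Finset.univ).card = Fintype.card V := by
    rw [Finset.card_image_of_injective _ hinjR, Finset.card_univ, Fintype.card_fin]
  have hcardL : (Finset.image w Finset.univ).card = (Finset.univ : Finset V).card := by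
    rw [hf, hcardR, Finset.card_univ]
  have hinjL : Set.InjOn w (Finset.univ : Finset V) :=
    Finset.injOn_of_card_image_eq hcardL
  -- sum of weights over univ equals sum of the target values
  have hsum : ∑ u : V, w u = ∑ i : Fin (Fintype.card V), (a + (i : ℕ) * d) := by
    have h1 : ∑ x ∈ Finset.image w Finset.univ, x = ∑ u : V, w u :=
      Finset.sum_image (fun x hx y hy h => hinjL hx hy h)
    have h2 : ∑ x ∈ Finset.image (fun i : Fin (Fintype.card V) => a + (i : ℕ) * d)
        Finset.univ, x = ∑ i : Fin (Fintype.card V), (a + (i : ℕ) * d) :=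
      Finset.sum_image (fun x _ y _ h => hinjR h)
    rw [← h1, hf, h2]
  -- swap sums: total weight = r * sum of labels
  have hswap : ∑ u : V, w u = r * ∑ v : V, ((f v : ℕ) + 1) := by
    simp only [hw, wsum]
    rw [Finset.mul_sum]
    calc ∑ u : V, ∑ v ∈ Finset.univ.filter (fun v => G.Adj u v), ((f v : ℕ) + 1)
        = ∑ u : V, ∑ v : V, if G.Adj u v then ((f v : ℕ) + 1) else 0 := by
          simp [Finset.sum_filter]
      _ = ∑ v : V, ∑ u : V, if G.Adj u v then ((f v : ℕ) + 1) else 0 := Finset.sum_comm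
      _ = ∑ v : V, ∑ u : V, if G.Adj v u then ((f v : ℕ) + 1) else 0 := by
          simp_rw [SimpleGraph.adj_comm]
      _ = ∑ v : V, r * ((f v : ℕ) + 1) := by
          refine Finset.sum_congr rfl fun v _ => ?_
          rw [← Finset.sum_filter, Finset.sum_const, smul_eq_mul, hreg v]
  -- label sum
  have hlab : ∑ v : V, ((f v : ℕ) + 1)
      = (∑ i ∈ Finset.range (Fintype.card V), i) + Fintype.card V := by
    rw [Equiv.sum_comp f (fun i : Fin (Fintype.card V) => (i : ℕ) + 1),
      Fin.sum_univ_eq_sum_range (fun i => i + 1), Finset.sum_add_distrib,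
      Finset.sum_const, Finset.card_range, smul_eq_mul, mul_one]
  have htarget : ∑ i : Fin (Fintype.card V), (a + (i : ℕ) * d)
      = Fintype.card V * a + (∑ i ∈ Finset.range (Fintype.card V), i) * d := by
    rw [Fin.sum_univ_eq_sum_range (fun i => a + i * d), Finset.sum_add_distrib,
      Finset.sum_const, Finset.card_range, smul_eq_mul, ← Finset.sum_mul]
  set S := ∑ i ∈ Finset.range (Fintype.card V), i with hS
  have hgauss : S * 2 = Fintype.card V * (Fintype.card V - 1) :=
    Finset.sum_range_id_mul_two (Fintype.card V)
  have hkey : r * (S + Fintype.card V) = Fintype.card V * a + S * d := by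
    rw [hlab] at hswap
    rw [htarget] at hsum
    omega
  -- move to ℤ and cancel the cardinality
  have hkeyZ : (r : ℤ) * ((S : ℤ) + (Fintype.card V : ℤ))
      = (Fintype.card V : ℤ) * a + (S : ℤ) * d := by exact_mod_cast hkey
  have hgaussZ : (S : ℤ) * 2 = (Fintype.card V : ℤ) * ((Fintype.card V : ℤ) - 1) := by
    have h : ((Fintype.card V : ℤ) - 1) = ((Fintype.card V - 1 : ℕ) : ℤ) := by
      have : 1 ≤ Fintype.card V := hn1
      push_cast [Nat.cast_sub this]; ring
    rw [h]
    exact_mod_cast hgauss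
  have h2 : (Fintype.card V : ℤ) * ((r : ℤ) * ((Fintype.card V : ℤ) + 1))
      = (Fintype.card V : ℤ) * (2 * a + ((Fintype.card V : ℤ) - 1) * d) := by
    linear_combination (2 : ℤ) * hkeyZ + ((d : ℤ) - (r : ℤ)) * hgaussZ
  have hNne : ((Fintype.card V : ℤ)) ≠ 0 := by exact_mod_cast hn1.ne'
  have hmain : (r : ℤ) * ((Fintype.card V : ℤ) + 1)
      = 2 * a + ((Fintype.card V : ℤ) - 1) * d := mul_left_cancel₀ hNne h2
  -- parity contradiction
  obtain ⟨m, hm⟩ := hn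
  have hm1 : 1 ≤ m := by omega
  have hoddn : Odd ((Fintype.card V : ℤ) - 1) := ⟨(m : ℤ) - 1, by push_cast [hm]; ring⟩
  have hodd : Odd (((Fintype.card V : ℤ) - 1) * d) := hoddn.mul (by exact_mod_cast hd)
  have heven : Even ((r : ℤ) * ((Fintype.card V : ℤ) + 1)) := by
    exact (Int.even_coe_nat r |>.mpr hr).mul_right _
  rw [hmain] at heven
  obtain ⟨k, hk⟩ := hodd
  rw [hk] at heven
  obtain ⟨l, hl⟩ := heven
  omega
end
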